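/- Let P and Q be finite connected posets on disjoint sets X₁ and X₂ and let v ∈ min(Q). Then { I ⊆ X₁ ⊔ X₂ : I ◎ (P ↘_v Q) } = { X₁ } ∪ { I ⊆ X₂ : I ◎ Q }. -/

import Mathlib

open scoped Classical

/-- A finite poset on a subset (`carrier`) of an ambient type `α`. -/
structure FinPoset (α : Type*) where
  carrier : Finset α
  le : α → α → Prop
  mem_of_le : ∀ ⦃x y⦄, le x y → x ∈ carrier ∧ y ∈ carrier
  le_refl : ∀ x ∈ carrier, le x x
  le_trans : ∀ ⦃x y z⦄, le x y → le y z → le x z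
  le_antisymm : ∀ ⦃x y⦄, le x y → le y x → x = y

namespace FinPoset

variable {α : Type*} [DecidableEq α]

/-- The strict order `x <_P y`. -/
def lt (P : FinPoset α) (x y : α) : Prop := P.le x y ∧ x ≠ y

/-- `min(P)`: the set of minimal elements of `P`. -/
noncomputable def minSet (P : FinPoset α) : Finset α :=
  P.carrier.filter (fun x => ∀ y, P.le y x → y = x)

/-- Connectivity of a subset `S`, for the graph with edges between comparable pairs. -/
def ConnOn (P : FinPoset α) (S : Set α) : Prop :=
  ∀ x ∈ S, ∀ y ∈ S,
    Relation.ReflTransGen (fun a b => a ∈ S ∧ b ∈ S ∧ (P.le a b ∨ P.le b a)) x y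

/-- A finite poset is connected if it is nonempty and any two elements are linked by a
chain of comparable pairs. -/
def Connected (P : FinPoset α) : Prop :=
  P.carrier.Nonempty ∧ P.ConnOn ↑P.carrier

/-- `I` is a connected component of `S` (for the comparability graph of `P`). -/
def IsCC (P : FinPoset α) (S I : Set α) : Prop :=
  I.Nonempty ∧ I ⊆ S ∧ P.ConnOn I ∧
    ∀ x ∈ I, ∀ y ∈ S, (P.le x y ∨ P.le y x) → y ∈ I

/-- `I_- = {x ∈ P \ I : ∃ y ∈ I, x ≤_P y}`. -/
noncomputable def below (P : FinPoset α) (I : Finset α) : Finset α :=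
  (P.carrier \ I).filter (fun x => ∃ y ∈ I, P.le x y)

/-- `I ◎ P` : `I_-` is a singleton `{w}` with `w ∈ min(P)`, and `I` is a connected
component of `{x ∈ P : w <_P x}`. -/
def Circ (P : FinPoset α) (I : Finset α) : Prop :=
  ∃ w, P.below I = {w} ∧ w ∈ P.minSet ∧
    P.IsCC {x | x ∈ P.carrier ∧ P.lt w x} ↑I

/-- The induced poset on a subset `S`. -/
def restrict (P : FinPoset α) (S : Finset α) : FinPoset α where
  carrier := P.carrier ∩ S
  le x y := P.le x y ∧ x ∈ S ∧ y ∈ S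
  mem_of_le := by
    intro x y h
    rcases P.mem_of_le h.1 with ⟨hx, hy⟩
    exact ⟨Finset.mem_inter.2 ⟨hx, h.2.1⟩, Finset.mem_inter.2 ⟨hy, h.2.2⟩⟩
  le_refl := by
    intro x hx
    rcases Finset.mem_inter.1 hx with ⟨h1, h2⟩
    exact ⟨P.le_refl x h1, h2, h2⟩
  le_trans := by
    rintro x y z ⟨h1, hx, hy⟩ ⟨h2, _, hz⟩
    exact ⟨P.le_trans h1 h2, hx, hz⟩
  le_antisymm := by
    rintro x y ⟨h1, _, _⟩ ⟨h2, _, _⟩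
    exact P.le_antisymm h1 h2

/-- The grafting `P ↘_v Q` of `P` above the vertex `v` of `Q` (auxiliary version, with
the disjointness hypotheses as arguments). -/
def graftAux (P Q : FinPoset α) (v : α) (hd : Disjoint P.carrier Q.carrier)
    (hv : v ∈ Q.carrier) : FinPoset α where
  carrier := P.carrier ∪ Q.carrier
  le x y := P.le x y ∨ Q.le x y ∨ (Q.le x v ∧ y ∈ P.carrier)
  mem_of_le := by
    rintro x y (h | h | ⟨h1, h2⟩)
    · rcases P.mem_of_le h with ⟨hx, hy⟩
      exact ⟨Finset.mem_union_left _ hx, Finset.mem_union_left _ hy⟩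
    · rcases Q.mem_of_le h with ⟨hx, hy⟩
      exact ⟨Finset.mem_union_right _ hx, Finset.mem_union_right _ hy⟩
    · exact ⟨Finset.mem_union_right _ (Q.mem_of_le h1).1, Finset.mem_union_left _ h2⟩
  le_refl := by
    intro x hx
    rcases Finset.mem_union.1 hx with h | h
    · exact Or.inl (P.le_refl x h)
    · exact Or.inr (Or.inl (Q.le_refl x h))
  le_trans := by
    rintro x y z (h1 | h1 | ⟨h1, h1'⟩) (h2 | h2 | ⟨h2, h2'⟩)
    · exact Or.inl (P.le_trans h1 h2)
    · exact absurd (Q.mem_of_le h2).1 (Finset.disjoint_left.1 hd (P.mem_of_le h1).2)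
    · exact absurd (Q.mem_of_le h2).1 (Finset.disjoint_left.1 hd (P.mem_of_le h1).2)
    · exact absurd (P.mem_of_le h2).1 (Finset.disjoint_right.1 hd (Q.mem_of_le h1).2)
    · exact Or.inr (Or.inl (Q.le_trans h1 h2))
    · exact Or.inr (Or.inr ⟨Q.le_trans h1 h2, h2'⟩)
    · exact Or.inr (Or.inr ⟨h1, (P.mem_of_le h2).2⟩)
    · exact absurd (Q.mem_of_le h2).1 (Finset.disjoint_left.1 hd h1')
    · exact absurd (Q.mem_of_le h2).1 (Finset.disjoint_left.1 hd h1')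
  le_antisymm := by
    rintro x y (h1 | h1 | ⟨h1, h1'⟩) (h2 | h2 | ⟨h2, h2'⟩)
    · exact P.le_antisymm h1 h2
    · exact absurd (Q.mem_of_le h2).1 (Finset.disjoint_left.1 hd (P.mem_of_le h1).2)
    · exact absurd (Q.mem_of_le h2).1 (Finset.disjoint_left.1 hd (P.mem_of_le h1).2)
    · exact absurd (P.mem_of_le h2).1 (Finset.disjoint_right.1 hd (Q.mem_of_le h1).2)
    · exact Q.le_antisymm h1 h2
    · exact absurd (Q.mem_of_le h1).1 (Finset.disjoint_left.1 hd h2')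
    · exact absurd (P.mem_of_le h2).2 (Finset.disjoint_right.1 hd (Q.mem_of_le h1).1)
    · exact absurd (Q.mem_of_le h2).1 (Finset.disjoint_left.1 hd h1')
    · exact absurd (Q.mem_of_le h1).1 (Finset.disjoint_left.1 hd h2')
  
/-- The grafting `P ↘_v Q` of `P` above the vertex `v` of `Q`: the poset on
`X₁ ⊔ X₂` restricting to `P` on `X₁` and to `Q` on `X₂`, with `q ≤ p` for `q ∈ X₂`,
`p ∈ X₁` iff `q ≤_Q v`.  (Junk value when the carriers are not disjoint or `v ∉ Q`.) -/
noncomputable def graft (P Q : FinPoset α) (v : α) : FinPoset α :=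
  if h : Disjoint P.carrier Q.carrier ∧ v ∈ Q.carrier then P.graftAux Q v h.1 h.2 else P

/-- The set of subsets `I` of the carrier with `I ◎ P`. -/
noncomputable def circSet (P : FinPoset α) : Finset (Finset α) :=
  P.carrier.powerset.filter (fun I => P.Circ I)

/-- Order isomorphisms from `A` to `B`, encoded as maps `α → α` that are the identity
outside of the carrier of `A`. -/
def Isos (A B : FinPoset α) : Set (α → α) :=
  {f | Set.BijOn f ↑A.carrier ↑B.carrier ∧
    (∀ x ∈ A.carrier, ∀ y ∈ A.carrier, (A.le x y ↔ B.le (f x) (f y))) ∧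
    ∀ x, x ∉ A.carrier → f x = x}

/-- `⟨A, B⟩`: the number of order isomorphisms from `A` to `B`. -/
noncomputable def pairing (A B : FinPoset α) : ℕ := Nat.card ↥(Isos A B)

/-- The NAP coproduct `δ(P) = (1/|min(P)|) Σ_{I ◎ P} I ⊗ (P \ I)`, with values in the
rational vector space spanned by pairs of finite posets. -/
noncomputable def delta (P : FinPoset α) : (FinPoset α × FinPoset α) →₀ ℚ :=
  ((P.minSet.card : ℚ))⁻¹ • ∑ I ∈ P.circSet,
    Finsupp.single (P.restrict I, P.restrict (P.carrier \ I)) (1 : ℚ)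

end FinPoset

namespace FinPoset

section GraftProof

variable {α : Type*} [DecidableEq α] {P Q : FinPoset α} {v : α}
  (hd : Disjoint P.carrier Q.carrier) (hvQ : v ∈ Q.carrier)

include hd in
private lemma aux_notQ {x : α} (hx : x ∈ P.carrier) : x ∉ Q.carrier :=
  Finset.disjoint_left.1 hd hx

include hd in
private lemma aux_notP {x : α} (hx : x ∈ Q.carrier) : x ∉ P.carrier :=
  Finset.disjoint_right.1 hd hx

/-- If the target is in `Q`, a graft-`le` is a `Q`-`le`. -/
private lemma aux_leQ {x y : α} (hy : y ∈ Q.carrier)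
    (h : (P.graftAux Q v hd hvQ).le x y) : Q.le x y := by
  rcases h with h | h | ⟨h, hy'⟩
  · exact absurd hy (aux_notQ hd (P.mem_of_le h).2)
  · exact h
  · exact absurd hy' (aux_notP hd hy)

/-- If the source is in `P`, a graft-`le` is a `P`-`le`. -/
private lemma aux_leP {x y : α} (hx : x ∈ P.carrier)
    (h : (P.graftAux Q v hd hvQ).le x y) : P.le x y := by
  rcases h with h | h | ⟨h, hy'⟩
  · exact h
  · exact absurd hx (aux_notP hd (Q.mem_of_le h).1)
  · exact absurd hx (aux_notP hd (Q.mem_of_le h).1)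

/-- If source in `Q` and target in `P`, then the source is `≤ v` in `Q`. -/
private lemma aux_cross {x y : α} (hx : x ∈ Q.carrier) (hy : y ∈ P.carrier)
    (h : (P.graftAux Q v hd hvQ).le x y) : Q.le x v := by
  rcases h with h | h | ⟨h, _⟩
  · exact absurd hx (aux_notQ hd (P.mem_of_le h).1)
  · exact absurd hy (aux_notP hd (Q.mem_of_le h).2)
  · exact h

private lemma aux_below_eq {I : Finset α} (hI : I ⊆ Q.carrier) :
    (P.graftAux Q v hd hvQ).below I = Q.below I := by
  ext x
  simp only [below, Finset.mem_filter, Finset.mem_sdiff]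
  simp only [graftAux, Finset.mem_union]
  constructor
  · rintro ⟨⟨_, hxI⟩, y, hyI, hle⟩
    have hyQ : y ∈ Q.carrier := hI hyI
    have := aux_leQ hd hvQ hyQ hle
    exact ⟨⟨(Q.mem_of_le this).1, hxI⟩, y, hyI, this⟩
  · rintro ⟨⟨hxQ, hxI⟩, y, hyI, hle⟩
    exact ⟨⟨Or.inr hxQ, hxI⟩, y, hyI, Or.inr (Or.inl hle)⟩

private lemma circ_PCarrier (hP : P.Connected) (hv : ∀ y, Q.le y v → y = v) :
    (P.graftAux Q v hd hvQ).Circ P.carrier := by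
  obtain ⟨p₀, hp₀⟩ := hP.1
  refine ⟨v, ?_, ?_, ?_, ?_, ?_, ?_⟩
  · -- below = {v}
    ext x
    simp only [below, Finset.mem_filter, Finset.mem_sdiff, Finset.mem_singleton]
    simp only [graftAux, Finset.mem_union]
    constructor
    · rintro ⟨⟨hx, hxP⟩, y, hyP, hle⟩
      have hxQ : x ∈ Q.carrier := hx.resolve_left hxP
      exact hv x (aux_cross hd hvQ hxQ hyP hle)
    · rintro rfl
      exact ⟨⟨Or.inr hvQ, aux_notP hd hvQ⟩, p₀, hp₀,
        Or.inr (Or.inr ⟨Q.le_refl _ hvQ, hp₀⟩)⟩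
  · -- v minimal
    simp only [minSet, Finset.mem_filter]
    simp only [graftAux, Finset.mem_union]
    refine ⟨Or.inr hvQ, fun y hy => ?_⟩
    rcases hy with h | h | ⟨h, hvP⟩
    · exact absurd (P.mem_of_le h).2 (aux_notP hd hvQ)
    · exact hv y h
    · exact absurd hvP (aux_notP hd hvQ)
  · exact ⟨p₀, hp₀⟩
  · -- P.carrier ⊆ S
    intro x hx
    have hx' : x ∈ P.carrier := hx
    refine ⟨Finset.mem_union_left _ hx', Or.inr (Or.inr ⟨Q.le_refl v hvQ, hx'⟩), ?_⟩
    rintro rfl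
    exact aux_notP hd hvQ hx'
  · -- connectivity
    intro x hx y hy
    exact Relation.ReflTransGen.mono (fun a b hab => ⟨hab.1, hab.2.1, hab.2.2.imp Or.inl Or.inl⟩) x y (hP.2 x hx y hy)
  · -- closure
    rintro x hx y ⟨hyc, hlt⟩ hcomp
    have hxP : x ∈ P.carrier := hx
    by_contra hyP
    have hyQ : y ∈ Q.carrier := (Finset.mem_union.1 hyc).resolve_left hyP
    rcases hcomp with h | h
    · exact aux_notP hd hyQ (P.mem_of_le (aux_leP hd hvQ hxP h)).2
    · have := aux_cross hd hvQ hyQ hxP h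
      exact hlt.2 (hv y this).symm
private lemma circ_of_circQ (hv : ∀ y, Q.le y v → y = v) {I : Finset α}
    (hI : I ⊆ Q.carrier) (hc : Q.Circ I) :
    (P.graftAux Q v hd hvQ).Circ I := by
  obtain ⟨w, hbel, hwmin, hne, hsub, hconn, hcl⟩ := hc
  obtain ⟨hwQ, hwm⟩ := Finset.mem_filter.1 hwmin
  refine ⟨w, ?_, ?_, hne, ?_, ?_, ?_⟩
  · rw [aux_below_eq hd hvQ hI]; exact hbel
  · simp only [minSet, Finset.mem_filter]
    simp only [graftAux, Finset.mem_union]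
    refine ⟨Or.inr hwQ, fun y hy => ?_⟩
    rcases hy with h | h | ⟨h, hwP⟩
    · exact absurd hwQ (aux_notQ hd (P.mem_of_le h).2)
    · exact hwm y h
    · exact absurd hwP (aux_notP hd hwQ)
  · -- I ⊆ S_G
    intro x hx
    obtain ⟨hxQ, hlt⟩ := hsub hx
    exact ⟨Finset.mem_union_right _ hxQ, Or.inr (Or.inl hlt.1), hlt.2⟩
  · -- connectivity
    intro x hx y hy
    exact Relation.ReflTransGen.mono (fun a b hab =>
      ⟨hab.1, hab.2.1, hab.2.2.imp (Or.inr ∘ Or.inl) (Or.inr ∘ Or.inl)⟩) x y (hconn x hx y hy)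
  · -- closure
    rintro x hx y ⟨hyc, hlt⟩ hcomp
    have hxQ : x ∈ Q.carrier := hI hx
    rcases Finset.mem_union.1 hyc with hyP | hyQ
    · exfalso
      rcases hcomp with h | h
      · have hxv : Q.le x v := aux_cross hd hvQ hxQ hyP h
        have hxv' : x = v := hv x hxv
        have := (hsub hx).2
        rw [hxv'] at this
        exact this.2 (hv w this.1)
      · exact aux_notQ hd (P.mem_of_le (aux_leP hd hvQ hyP h)).2 hxQ
    · have hlt' : Q.lt w y := ⟨aux_leQ hd hvQ hyQ hlt.1, hlt.2⟩
      refine hcl x hx y ⟨hyQ, hlt'⟩ ?_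
      exact hcomp.imp (aux_leQ hd hvQ hyQ) (aux_leQ hd hvQ hxQ)

private lemma circ_cases (hP : P.Connected) (hv : ∀ y, Q.le y v → y = v)
    {I : Finset α} (hIsub : I ⊆ (P.graftAux Q v hd hvQ).carrier)
    (hc : (P.graftAux Q v hd hvQ).Circ I) :
    I = P.carrier ∨ (I ⊆ Q.carrier ∧ Q.Circ I) := by
  obtain ⟨w, hbel, hwmin, hne, hsub, hconn, hcl⟩ := hc
  obtain ⟨hwc, hwm⟩ := Finset.mem_filter.1 hwmin
  have hwQ : w ∈ Q.carrier := by
    rcases Finset.mem_union.1 hwc with h | h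
    · exact absurd h (by
        intro hwP
        have := hwm v (Or.inr (Or.inr ⟨Q.le_refl v hvQ, hwP⟩))
        exact aux_notP hd hvQ (this ▸ hwP))
    · exact h
  have hwm' : ∀ y, Q.le y w → y = w := fun y hy => hwm y (Or.inr (Or.inl hy))
  by_cases hI1 : ∃ p, p ∈ I ∧ p ∈ P.carrier
  · left
    obtain ⟨p, hpI, hpP⟩ := hI1
    -- w = v
    have hwv : w = v := by
      have := (hsub hpI).2
      exact hv w (aux_cross hd hvQ hwQ hpP this.1)
    -- I ⊆ P.carrier
    have hIP : ∀ x ∈ I, x ∈ P.carrier := by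
      intro x hx
      have hpath := hconn p hpI x hx
      induction hpath with
      | refl => exact hpP
      | tail _ hbc ih =>
        rename_i b c _
        obtain ⟨hbI, hcI, hcomp⟩ := hbc
        have hbP : b ∈ P.carrier := ih hbI
        by_contra hcP
        have hcQ : c ∈ Q.carrier := (Finset.mem_union.1 (hIsub hcI)).resolve_left hcP
        rcases hcomp with h | h
        · exact hcP (P.mem_of_le (aux_leP hd hvQ hbP h)).2
        · have hcv : c = v := hv c (aux_cross hd hvQ hcQ hbP h)
          exact (hsub hcI).2.2 (hwv.trans hcv.symm)
    -- P.carrier ⊆ I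
    have hPI : ∀ x ∈ P.carrier, x ∈ I := by
      intro x hx
      have hpath := hP.2 p hpP x hx
      induction hpath with
      | refl => exact hpI
      | tail _ hbc ih =>
        rename_i b c _
        obtain ⟨hbP, hcP, hcomp⟩ := hbc
        have hbP' : b ∈ P.carrier := hbP
        have hcP' : c ∈ P.carrier := hcP
        refine hcl b (ih hbP') c ⟨Finset.mem_union_left _ hcP', ?_, ?_⟩
          (hcomp.imp Or.inl Or.inl)
        · rw [hwv]; exact Or.inr (Or.inr ⟨Q.le_refl v hvQ, hcP'⟩)
        · rw [hwv]; rintro rfl; exact aux_notP hd hvQ hcP'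
    exact Finset.ext fun x => ⟨fun h => hIP x h, fun h => hPI x h⟩
  · right
    have hIQ : I ⊆ Q.carrier := by
      intro x hx
      exact (Finset.mem_union.1 (hIsub hx)).resolve_left fun h => hI1 ⟨x, hx, h⟩
    refine ⟨hIQ, w, ?_, ?_, hne, ?_, ?_, ?_⟩
    · rw [← aux_below_eq hd hvQ hIQ]; exact hbel
    · exact Finset.mem_filter.2 ⟨hwQ, hwm'⟩
    · intro x hx
      have hxQ : x ∈ Q.carrier := hIQ hx
      exact ⟨hxQ, aux_leQ hd hvQ hxQ (hsub hx).2.1, (hsub hx).2.2⟩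
    · intro x hx y hy
      refine Relation.ReflTransGen.mono (fun a b hab => ?_) x y (hconn x hx y hy)
      exact ⟨hab.1, hab.2.1, hab.2.2.imp (aux_leQ hd hvQ (hIQ hab.2.1))
        (aux_leQ hd hvQ (hIQ hab.1))⟩
    · rintro x hx y ⟨hyQ, hlt⟩ hcomp
      refine hcl x hx y ⟨Finset.mem_union_right _ hyQ, Or.inr (Or.inl hlt.1), hlt.2⟩ ?_
      exact hcomp.imp (Or.inr ∘ Or.inl) (Or.inr ∘ Or.inl)

end GraftProof

end FinPoset

/-- For finite connected posets `P`, `Q` on disjoint sets and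
`v ∈ min(Q)`, the subsets `I` with `I ◎ (P ↘_v Q)` are exactly `X₁` together with the
subsets `I ⊆ X₂` with `I ◎ Q`. -/
theorem circSet_graft_min {α : Type*} [DecidableEq α] (P Q : FinPoset α)
    (hP : P.Connected) (hQ : Q.Connected) (hd : Disjoint P.carrier Q.carrier)
    (v : α) (hv : v ∈ Q.minSet) :
    (FinPoset.graft P Q v).circSet = insert P.carrier Q.circSet := by
  obtain ⟨hvQ, hvm⟩ := Finset.mem_filter.1 hv
  have hvm : ∀ y, Q.le y v → y = v := hvm
  rw [FinPoset.graft, dif_pos ⟨hd, hvQ⟩]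
  ext I
  simp only [FinPoset.circSet, Finset.mem_filter, Finset.mem_powerset, Finset.mem_insert]
  constructor
  · rintro ⟨hsub, hc⟩
    rcases FinPoset.circ_cases hd hvQ hP hvm hsub hc with h | ⟨h1, h2⟩
    · exact Or.inl h
    · exact Or.inr ⟨h1, h2⟩
  · rintro (rfl | ⟨h1, h2⟩)
    · exact ⟨Finset.subset_union_left, FinPoset.circ_PCarrier hd hvQ hP hvm⟩
    · exact ⟨h1.trans Finset.subset_union_right,
        FinPoset.circ_of_circQ hd hvQ hvm h1 h2⟩
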